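/- Let w : (0,∞) → (0,∞) be measurable and suppose (1/w) ∗ (1/w)(t) ≤ 1/w(t) for all t > 0 (convolution on (0,∞)). Then for all f, g in the weighted space L²_w(0,∞), the convolution f ∗ g satisfies ‖f ∗ g‖_{L²_w} ≤ ‖f‖_{L²_w} ‖g‖_{L²_w}; i.e., (L²_w(0,∞), ∗) is a Banach algebra. -/

import Mathlib

open MeasureTheory Set ENNReal

/-- If `(1/w) ∗ (1/w)(t) ≤ 1/w(t)` on `(0,∞)`, then convolution is submultiplicative
on the weighted space `L²_w(0,∞)`: `‖f ∗ g‖²_{L²_w} ≤ ‖f‖²_{L²_w} ‖g‖²_{L²_w}`. -/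
theorem stmt6 (w : ℝ → ℝ) (hwpos : ∀ t > 0, 0 < w t) (hwmeas : Measurable w)
    (hconv : ∀ t > 0,
      (∫⁻ τ in Ioo (0 : ℝ) t, ENNReal.ofReal (1 / (w τ * w (t - τ)))) ≤
        ENNReal.ofReal (1 / w t))
    (f g : ℝ → ℂ) (hf : Measurable f) (hg : Measurable g) :
    (∫⁻ t in Ioi (0 : ℝ),
        (‖∫ τ in Ioo (0 : ℝ) t, f τ * g (t - τ)‖₊ : ℝ≥0∞) ^ 2 * ENNReal.ofReal (w t)) ≤
      (∫⁻ t in Ioi (0 : ℝ), (‖f t‖₊ : ℝ≥0∞) ^ 2 * ENNReal.ofReal (w t)) *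
        (∫⁻ t in Ioi (0 : ℝ), (‖g t‖₊ : ℝ≥0∞) ^ 2 * ENNReal.ofReal (w t)) := by
  set F : ℝ → ℝ≥0∞ := fun t => (‖f t‖₊ : ℝ≥0∞) ^ 2 * ENNReal.ofReal (w t) with hF
  set G : ℝ → ℝ≥0∞ := fun t => (‖g t‖₊ : ℝ≥0∞) ^ 2 * ENNReal.ofReal (w t) with hG
  have hFmeas : Measurable F := by
    exact ((hf.nnnorm.coe_nnreal_ennreal).pow_const 2).mul (hwmeas.ennreal_ofReal)
  have hGmeas : Measurable G := by
    exact ((hg.nnnorm.coe_nnreal_ennreal).pow_const 2).mul (hwmeas.ennreal_ofReal)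
  -- pointwise bound
  have key : ∀ t ∈ Ioi (0:ℝ),
      (‖∫ τ in Ioo (0 : ℝ) t, f τ * g (t - τ)‖₊ : ℝ≥0∞) ^ 2 * ENNReal.ofReal (w t) ≤
        ∫⁻ τ in Ioo (0:ℝ) t, F τ * G (t - τ) := by
    intro t ht
    rw [mem_Ioi] at ht
    set u : ℝ → ℝ≥0∞ := fun τ => (F τ * G (t - τ)) ^ (1/2 : ℝ) with hu
    set v : ℝ → ℝ≥0∞ := fun τ => (ENNReal.ofReal (1 / (w τ * w (t - τ)))) ^ (1/2 : ℝ) with hv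
    have humeas : Measurable u :=
      (hFmeas.mul (hGmeas.comp (measurable_const.sub measurable_id))).pow_const _
    have hvmeas : Measurable v := by
      apply Measurable.pow_const
      apply Measurable.ennreal_ofReal
      exact (measurable_const.div (hwmeas.mul (hwmeas.comp (measurable_const.sub measurable_id))))
    have step1 : (‖∫ τ in Ioo (0 : ℝ) t, f τ * g (t - τ)‖₊ : ℝ≥0∞) ≤
        ∫⁻ τ in Ioo (0:ℝ) t, u τ * v τ := by
      refine le_trans (enorm_integral_le_lintegral_enorm _) ?_
      refine le_of_eq (setLIntegral_congr_fun_ae measurableSet_Ioo (ae_of_all _ ?_))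
      intro τ hτ
      obtain ⟨h1, h2⟩ := hτ
      have hwτ : 0 < w τ := hwpos τ h1
      have hwt : 0 < w (t - τ) := hwpos _ (by linarith)
      rw [hu, hv]
      rw [← ENNReal.mul_rpow_of_nonneg _ _ (by norm_num : (0:ℝ) ≤ 1/2)]
      have : F τ * G (t - τ) * ENNReal.ofReal (1 / (w τ * w (t - τ))) =
          ((‖f τ‖₊ : ℝ≥0∞) * (‖g (t - τ)‖₊ : ℝ≥0∞)) ^ 2 := by
        rw [hF, hG]
        have h1' : ENNReal.ofReal (w τ) * ENNReal.ofReal (w (t - τ)) *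
            ENNReal.ofReal (1 / (w τ * w (t - τ))) = 1 := by
          rw [← ENNReal.ofReal_mul hwτ.le, ← ENNReal.ofReal_mul (by positivity)]
          rw [mul_one_div, div_self (by positivity)]
          exact ENNReal.ofReal_one
        calc (‖f τ‖₊ : ℝ≥0∞) ^ 2 * ENNReal.ofReal (w τ) *
              ((‖g (t - τ)‖₊ : ℝ≥0∞) ^ 2 * ENNReal.ofReal (w (t - τ))) *
              ENNReal.ofReal (1 / (w τ * w (t - τ)))
            = ((‖f τ‖₊ : ℝ≥0∞) * (‖g (t - τ)‖₊ : ℝ≥0∞)) ^ 2 *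
              (ENNReal.ofReal (w τ) * ENNReal.ofReal (w (t - τ)) *
                ENNReal.ofReal (1 / (w τ * w (t - τ)))) := by ring
          _ = _ := by rw [h1']; ring
      rw [this]
      have : (((‖f τ‖₊ : ℝ≥0∞) * (‖g (t - τ)‖₊ : ℝ≥0∞)) ^ 2) ^ (1/2 : ℝ) =
          (‖f τ‖₊ : ℝ≥0∞) * (‖g (t - τ)‖₊ : ℝ≥0∞) := by
        rw [← ENNReal.rpow_natCast _ 2, ← ENNReal.rpow_mul]
        norm_num
      rw [this, enorm_mul]; rfl
    have step2 : (∫⁻ τ in Ioo (0:ℝ) t, u τ * v τ) ≤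
        (∫⁻ τ in Ioo (0:ℝ) t, F τ * G (t - τ)) ^ (1/2 : ℝ) *
          (ENNReal.ofReal (1 / w t)) ^ (1/2 : ℝ) := by
      have hpq : Real.HolderConjugate 2 2 := Real.HolderConjugate.two_two
      have := ENNReal.lintegral_mul_le_Lp_mul_Lq (volume.restrict (Ioo (0:ℝ) t)) hpq
        humeas.aemeasurable hvmeas.aemeasurable
      have hu2 : ∀ τ, u τ ^ (2:ℝ) = F τ * G (t - τ) := by
        intro τ; rw [hu, ← ENNReal.rpow_mul]; norm_num
      have hv2 : ∀ τ, v τ ^ (2:ℝ) = ENNReal.ofReal (1 / (w τ * w (t - τ))) := by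
        intro τ; rw [hv, ← ENNReal.rpow_mul]; norm_num
      simp only [hu2, hv2] at this
      refine le_trans this ?_
      gcongr
      exact hconv t ht
    calc (‖∫ τ in Ioo (0 : ℝ) t, f τ * g (t - τ)‖₊ : ℝ≥0∞) ^ 2 * ENNReal.ofReal (w t)
        ≤ ((∫⁻ τ in Ioo (0:ℝ) t, F τ * G (t - τ)) ^ (1/2 : ℝ) *
            (ENNReal.ofReal (1 / w t)) ^ (1/2 : ℝ)) ^ 2 * ENNReal.ofReal (w t) := by
          gcongr
          exact le_trans step1 step2
      _ = (∫⁻ τ in Ioo (0:ℝ) t, F τ * G (t - τ)) *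
            (ENNReal.ofReal (1 / w t) * ENNReal.ofReal (w t)) := by
          rw [mul_pow]
          rw [← ENNReal.rpow_natCast (_ ^ (1/2:ℝ)) 2, ← ENNReal.rpow_natCast (_ ^ (1/2:ℝ)) 2,
            ← ENNReal.rpow_mul, ← ENNReal.rpow_mul]
          norm_num
          ring
      _ ≤ _ := by
          have hwt := hwpos t ht
          rw [← ENNReal.ofReal_mul (by positivity), one_div, inv_mul_cancel₀ hwt.ne',
            ENNReal.ofReal_one, mul_one]
  -- Tonelli part
  set F' : ℝ → ℝ≥0∞ := (Ioi (0:ℝ)).indicator F with hF'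
  set G' : ℝ → ℝ≥0∞ := (Ioi (0:ℝ)).indicator G with hG'
  have hF'meas : Measurable F' := hFmeas.indicator measurableSet_Ioi
  have hG'meas : Measurable G' := hGmeas.indicator measurableSet_Ioi
  have claim1 : ∀ t : ℝ, (∫⁻ τ in Ioo (0:ℝ) t, F τ * G (t - τ)) =
      ∫⁻ τ, F' τ * G' (t - τ) := by
    intro t
    rw [← lintegral_indicator measurableSet_Ioo]
    congr 1
    ext τ
    by_cases hτ : τ ∈ Ioo (0:ℝ) t
    · rw [indicator_of_mem hτ, hF', hG', indicator_of_mem (mem_Ioi.2 hτ.1),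
        indicator_of_mem (mem_Ioi.2 (by have := hτ.2; simp only [sub_pos]; linarith))]
    · rw [indicator_of_notMem hτ]
      rw [mem_Ioo, not_and_or] at hτ
      rcases hτ with h | h
      · rw [hF', indicator_of_notMem (by simpa using h), zero_mul]
      · rw [hG', indicator_of_notMem (by simp; linarith [not_lt.1 h]), mul_zero]
  calc (∫⁻ t in Ioi (0 : ℝ),
        (‖∫ τ in Ioo (0 : ℝ) t, f τ * g (t - τ)‖₊ : ℝ≥0∞) ^ 2 * ENNReal.ofReal (w t))
      ≤ ∫⁻ t in Ioi (0:ℝ), ∫⁻ τ, F' τ * G' (t - τ) := by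
        refine setLIntegral_mono_ae ?_ (ae_of_all _ fun t ht => ?_)
        · have hm : Measurable (Function.uncurry fun t τ => F' τ * G' (t - τ)) :=
            (hF'meas.comp measurable_snd).mul
              (hG'meas.comp (measurable_fst.sub measurable_snd))
          exact hm.lintegral_prod_right.aemeasurable
        · rw [← claim1 t]; exact key t ht
    _ ≤ ∫⁻ t, ∫⁻ τ, F' τ * G' (t - τ) := setLIntegral_le_lintegral _ _
    _ = ∫⁻ τ, ∫⁻ t, F' τ * G' (t - τ) := by
        apply lintegral_lintegral_swap
        have hm : Measurable (Function.uncurry fun t τ => F' τ * G' (t - τ)) :=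
          (hF'meas.comp measurable_snd).mul
            (hG'meas.comp (measurable_fst.sub measurable_snd))
        exact hm.aemeasurable
    _ = ∫⁻ τ, F' τ * ∫⁻ t, G' (t - τ) := by
        congr 1; ext τ
        exact lintegral_const_mul (F' τ) (hG'meas.comp (measurable_id.sub measurable_const))
    _ = ∫⁻ τ, F' τ * ∫⁻ t, G' t := by
        congr 1; ext τ; rw [lintegral_sub_right_eq_self G' τ]
    _ = (∫⁻ τ, F' τ) * ∫⁻ t, G' t := lintegral_mul_const _ hF'meas
    _ = _ := by
        rw [hF', hG', lintegral_indicator measurableSet_Ioi, lintegral_indicator measurableSet_Ioi]
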